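/- Let →₁ and →₂ be binary relations on a set A. If (1) →₁ ⊆ →₂, (2) →₂ is well-founded (there is no infinite →₂-chain), and (3) →₂ ⊆ (→₁ ∘ →₂* ∘ ↔₁* ∘ ←₂*), where ↔₁* denotes the reflexive-transitive-symmetric closure of →₁ and →₂* the reflexive-transitive closure of →₂, then the reflexive-transitive-symmetric closures of →₁ and →₂ coincide: ↔₁* = ↔₂*. -/

import Mathlib

/-- reflexive-transitive closure -/
def star {A : Type*} (r : A → A → Prop) : A → A → Prop := Relation.ReflTransGen r

/-- reflexive-transitive-symmetric closure -/
def conv {A : Type*} (r : A → A → Prop) : A → A → Prop :=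
  Relation.ReflTransGen (fun a b => r a b ∨ r b a)

lemma conv_symm {A : Type*} {r : A → A → Prop} {a b : A} (h : conv r a b) : conv r b a :=
  (@Relation.ReflTransGen.stdSymm _ _ ⟨fun _ _ h => h.symm⟩).symm _ _ h

theorem stmt_0 {A : Type*} (r1 r2 : A → A → Prop)
    (h1 : ∀ a b, r1 a b → r2 a b)
    (h2 : WellFounded (fun a b => r2 b a))
    (h3 : ∀ a b, r2 a b →
      ∃ x y z, r1 a x ∧ star r2 x y ∧ conv r1 y z ∧ star r2 b z) :
    conv r1 = conv r2 := by
  have key : ∀ a, ∀ b, star r2 a b → conv r1 a b := by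
    intro a
    induction a using h2.transGen.induction with
    | _ a IH =>
      intro b hab
      rcases Relation.ReflTransGen.cases_head hab with rfl | ⟨c, hac, hcb⟩
      · exact Relation.ReflTransGen.refl
      obtain ⟨x, y, z, hax, hxy, hyz, hcz⟩ := h3 a c hac
      have hax2 : Relation.TransGen (fun p q => r2 q p) x a :=
        Relation.TransGen.single (h1 a x hax)
      have hac2 : Relation.TransGen (fun p q => r2 q p) c a :=
        Relation.TransGen.single hac
      have c1 : conv r1 a x := Relation.ReflTransGen.single (Or.inl hax)
      have c2 : conv r1 x y := IH x hax2 y hxy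
      have c3 : conv r1 z c := conv_symm (IH c hac2 z hcz)
      have c4 : conv r1 c b := IH c hac2 b hcb
      exact ((c1.trans c2).trans hyz).trans (c3.trans c4)
  funext a b
  apply propext
  constructor
  · exact Relation.ReflTransGen.mono (fun a b h => Or.imp (h1 a b) (h1 b a) h) a b
  · intro h
    induction h with
    | refl => exact Relation.ReflTransGen.refl
    | tail _ hstep ih =>
      rcases hstep with h | h
      · exact ih.trans (key _ _ (Relation.ReflTransGen.single h))
      · exact ih.trans (conv_symm (key _ _ (Relation.ReflTransGen.single h)))
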